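/- arXiv:1404.6792 — 5 statements merged into one kernel-verified Lean document; each statement's English description precedes it below -/
import Mathlib

section
/- Let τ > 0 and z, k ∈ ℝ, and define the Black-Scholes call price u^BS(σ) = e^z Φ(d₊(σ)) − e^k Φ(d₋(σ)) for σ > 0, where d±(σ) = (z − k ± σ²τ/2)/(σ√τ) and Φ is the standard normal CDF. Then for every σ > 0, the second derivative in σ satisfies ∂_σ² u^BS(σ) = ((k − z)²/(τσ³) − τσ/4) · ∂_σ u^BS(σ). -/
open Real

/-- The standard normal CDF. -/
noncomputable def normCDF (x : ℝ) : ℝ :=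
  ∫ t in Set.Iic x, (2 * π) ^ (-(1 : ℝ) / 2) * Real.exp (-t ^ 2 / 2)

/-- The Black-Scholes call price as a function of volatility `σ`. -/
noncomputable def uBS (τ z k σ : ℝ) : ℝ :=
  Real.exp z * normCDF ((z - k + σ ^ 2 * τ / 2) / (σ * Real.sqrt τ))
    - Real.exp k * normCDF ((z - k - σ ^ 2 * τ / 2) / (σ * Real.sqrt τ))

open MeasureTheory

noncomputable def phiPDF (x : ℝ) : ℝ := (2 * π) ^ (-(1 : ℝ) / 2) * Real.exp (-x ^ 2 / 2)

lemma phi_integrable : Integrable phiPDF := by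
  have : phiPDF = fun t : ℝ => (2 * π) ^ (-(1 : ℝ) / 2) * Real.exp (-(1/2) * t ^ 2) := by
    funext t; unfold phiPDF; ring_nf
  rw [this]
  exact (integrable_exp_neg_mul_sq (by norm_num)).const_mul _

lemma hasDerivAt_normCDF (x : ℝ) : HasDerivAt normCDF (phiPDF x) x := by
  have hcont : Continuous phiPDF := by unfold phiPDF; continuity
  have key : ∀ y : ℝ, normCDF y = (∫ t in (0:ℝ)..y, phiPDF t) + normCDF 0 := by
    intro y
    have := intervalIntegral.integral_Iic_sub_Iic (μ := volume) (f := phiPDF)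
      phi_integrable.integrableOn phi_integrable.integrableOn (a := 0) (b := y)
    unfold normCDF phiPDF at *
    linarith [this]
  have h1 : HasDerivAt (fun y => (∫ t in (0:ℝ)..y, phiPDF t) + normCDF 0) (phiPDF x) x := by
    apply HasDerivAt.add_const
    exact intervalIntegral.integral_hasDerivAt_right
      phi_integrable.intervalIntegrable
      (hcont.stronglyMeasurableAtFilter _ _) hcont.continuousAt
  exact h1.congr_of_eventuallyEq (Filter.Eventually.of_forall key)

lemma hasDerivAt_phiPDF (x : ℝ) : HasDerivAt phiPDF (-x * phiPDF x) x := by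
  have h : HasDerivAt (fun t : ℝ => -t ^ 2 / 2) (-x) x := by
    have := ((hasDerivAt_pow 2 x).neg).div_const 2
    refine this.congr_deriv (Eq.symm ?_)
    ring
  have := (h.exp.const_mul ((2 * π) ^ (-(1 : ℝ) / 2)))
  unfold phiPDF
  refine this.congr_deriv (Eq.symm ?_); ring

theorem black_scholes_second_sigma_derivative_ratio
    (τ z k : ℝ) (hτ : 0 < τ) :
    ∀ σ : ℝ, 0 < σ →
      deriv (deriv fun σ' => uBS τ z k σ') σ
        = ((k - z) ^ 2 / (τ * σ ^ 3) - τ * σ / 4) *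
            deriv (fun σ' => uBS τ z k σ') σ := by
  have hs : 0 < Real.sqrt τ := Real.sqrt_pos.mpr hτ
  have hs2 : Real.sqrt τ ^ 2 = τ := Real.sq_sqrt hτ.le
  set s := Real.sqrt τ with hsdef
  set a := (z - k) / s with hadef
  set g : ℝ → ℝ := fun σ => a * σ⁻¹ + s / 2 * σ with hg
  set h : ℝ → ℝ := fun σ => a * σ⁻¹ - s / 2 * σ with hh
  -- rewriting of d± for σ > 0
  have hdp : ∀ σ : ℝ, 0 < σ → (z - k + σ ^ 2 * τ / 2) / (σ * s) = g σ := by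
    intro σ hσ
    rw [hg]; simp only [hadef]
    rw [← hs2]
    field_simp
  have hdm : ∀ σ : ℝ, 0 < σ → (z - k - σ ^ 2 * τ / 2) / (σ * s) = h σ := by
    intro σ hσ
    rw [hh]; simp only [hadef]
    rw [← hs2]
    field_simp
  -- key identity
  have hid : ∀ σ : ℝ, 0 < σ → Real.exp k * phiPDF (h σ) = Real.exp z * phiPDF (g σ) := by
    intro σ hσ
    unfold phiPDF
    rw [show Real.exp k * ((2*π) ^ (-(1:ℝ)/2) * Real.exp (-(h σ)^2/2))
        = (2*π) ^ (-(1:ℝ)/2) * Real.exp (k + -(h σ)^2/2) by rw [Real.exp_add]; ring,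
       show Real.exp z * ((2*π) ^ (-(1:ℝ)/2) * Real.exp (-(g σ)^2/2))
        = (2*π) ^ (-(1:ℝ)/2) * Real.exp (z + -(g σ)^2/2) by rw [Real.exp_add]; ring]
    congr 1
    rw [Real.exp_eq_exp]
    have hgh : g σ ^ 2 - h σ ^ 2 = 2 * (z - k) := by
      have : g σ ^ 2 - h σ ^ 2 = 2 * a * s := by rw [hg, hh]; field_simp; ring
      rw [this, hadef]; field_simp
    linear_combination hgh / 2
  -- derivatives of g and h
  have hgd : ∀ σ : ℝ, 0 < σ → HasDerivAt g (-(h σ) / σ) σ := by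
    intro σ hσ
    have := ((hasDerivAt_inv hσ.ne').const_mul a).add ((hasDerivAt_id σ).const_mul (s / 2))
    refine this.congr_deriv (Eq.symm ?_)
    rw [hh]; field_simp; ring
  have hhd : ∀ σ : ℝ, 0 < σ → HasDerivAt h (-(g σ) / σ) σ := by
    intro σ hσ
    have := ((hasDerivAt_inv hσ.ne').const_mul a).sub ((hasDerivAt_id σ).const_mul (s / 2))
    refine this.congr_deriv (Eq.symm ?_)
    rw [hg]; field_simp; ring
  -- first derivative of uBS
  have huBS : ∀ σ : ℝ, 0 < σ →
      HasDerivAt (fun σ' => uBS τ z k σ') (Real.exp z * s * phiPDF (g σ)) σ := by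
    intro σ hσ
    have hF : HasDerivAt (fun σ' => Real.exp z * normCDF (g σ') - Real.exp k * normCDF (h σ'))
        (Real.exp z * s * phiPDF (g σ)) σ := by
      have h1 := (((hasDerivAt_normCDF (g σ)).comp σ (hgd σ hσ)).const_mul (Real.exp z))
      have h2 := (((hasDerivAt_normCDF (h σ)).comp σ (hhd σ hσ)).const_mul (Real.exp k))
      have := h1.sub h2
      refine this.congr_deriv (Eq.symm ?_)
      have h3 := hid σ hσ
      have hghs : g σ - h σ = s * σ := by simp only [hg, hh]; ring
      rw [show Real.exp k * (phiPDF (h σ) * (-(g σ) / σ)) = (Real.exp k * phiPDF (h σ)) * (-(g σ) / σ) from by ring, h3]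
      field_simp
      linear_combination Real.exp z * phiPDF (g σ) * hghs
    apply hF.congr_of_eventuallyEq
    filter_upwards [eventually_gt_nhds hσ] with σ' hσ'
    unfold uBS
    rw [← hsdef, hdp σ' hσ', hdm σ' hσ']
  -- conclude
  intro σ hσ
  have hVeq : deriv (fun σ' => uBS τ z k σ')
      =ᶠ[nhds σ] fun σ' => Real.exp z * s * phiPDF (g σ') := by
    filter_upwards [eventually_gt_nhds hσ] with σ' hσ'
    exact (huBS σ' hσ').deriv
  have hVd : HasDerivAt (fun σ' => Real.exp z * s * phiPDF (g σ'))
      (Real.exp z * s * (-(g σ) * phiPDF (g σ) * (-(h σ) / σ))) σ :=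
    ((hasDerivAt_phiPDF (g σ)).comp σ (hgd σ hσ)).const_mul (Real.exp z * s)
  have hcoef : g σ * h σ / σ = (k - z) ^ 2 / (τ * σ ^ 3) - τ * σ / 4 := by
    rw [hg, hh, hadef]
    simp only
    rw [← hs2]
    field_simp
    ring
  rw [hVeq.deriv_eq, hVd.deriv, (huBS σ hσ).deriv, ← hcoef]
  field_simp
end

section
/- Let A > 0, B > 0 and C, F ∈ ℝ with 4AB − F² > 0. Define the bivariate Gaussian kernel Γ₀(x, y; ξ, η) = (2π√(4AB − F²))^{−1} exp(−(1/2) mᵀ Σ^{−1} m), where Σ is the 2×2 matrix [[2A, F], [F, 2B]] and m = (ξ − x + A, η − y − C). Then for all x, y, ξ, η ∈ ℝ, the following identities hold for the partial derivatives in the backward variables x and y: (i) x·Γ₀ + 2A·∂_x Γ₀ + F·∂_y Γ₀ − A·Γ₀ = ξ·Γ₀, and (ii) y·Γ₀ + F·∂_x Γ₀ + 2B·∂_y Γ₀ + C·Γ₀ = η·Γ₀. -/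
open Real Matrix

theorem gaussian_kernel_commutation_identities
    (A B C F : ℝ) (hA : 0 < A) (hB : 0 < B) (hdet : 0 < 4 * A * B - F ^ 2)
    (Γ₀ : ℝ → ℝ → ℝ → ℝ → ℝ)
    (hΓ : ∀ x y ξ η : ℝ, Γ₀ x y ξ η =
      (2 * π * Real.sqrt (4 * A * B - F ^ 2))⁻¹ *
        Real.exp (-(1 / 2) *
          (![ξ - x + A, η - y - C] ⬝ᵥ
            ((!![2 * A, F; F, 2 * B] : Matrix (Fin 2) (Fin 2) ℝ)⁻¹).mulVec
              ![ξ - x + A, η - y - C]))) :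
    ∀ x y ξ η : ℝ,
      (x * Γ₀ x y ξ η
          + 2 * A * deriv (fun x' => Γ₀ x' y ξ η) x
          + F * deriv (fun y' => Γ₀ x y' ξ η) y
          - A * Γ₀ x y ξ η
        = ξ * Γ₀ x y ξ η)
      ∧ (y * Γ₀ x y ξ η
          + F * deriv (fun x' => Γ₀ x' y ξ η) x
          + 2 * B * deriv (fun y' => Γ₀ x y' ξ η) y
          + C * Γ₀ x y ξ η
        = η * Γ₀ x y ξ η) := by
  intro x y ξ η
  have hD : (4 * A * B - F ^ 2) ≠ 0 := ne_of_gt hdet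
  set D := 4 * A * B - F ^ 2 with hD_def
  set c := (2 * π * Real.sqrt D)⁻¹ with hc
  have hdet2 : (!![2*A,F;F,2*B] : Matrix (Fin 2) (Fin 2) ℝ).det = D := by
    simp [Matrix.det_fin_two_of]; ring
  have key : ∀ x' y' : ℝ, Γ₀ x' y' ξ η =
      c * Real.exp (-B/D*(ξ-x'+A)^2 + F*(η-y'-C)/D*(ξ-x'+A) + -(A/D)*(η-y'-C)^2) := by
    intro x' y'
    rw [hΓ]
    congr 1
    rw [Matrix.inv_def, hdet2, Matrix.adjugate_fin_two]
    simp [Matrix.mulVec, dotProduct, Fin.sum_univ_two, Ring.inverse_eq_inv']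
    field_simp
    ring
  set u := ξ - x + A with hu_def
  set v := η - y - C with hv_def
  set E := Real.exp (-B/D*u^2 + F*v/D*u + -(A/D)*v^2) with hE
  -- x-derivative
  have hgx : HasDerivAt (fun x' : ℝ => -B/D*(ξ-x'+A)^2 + F*v/D*(ξ-x'+A) + -(A/D)*v^2)
      (-B/D * (2 * u ^ 1 * (-1)) + F*v/D * (-1)) x := by
    have hu1 : HasDerivAt (fun x' : ℝ => ξ - x' + A) (-1) x := by
      simpa using (((hasDerivAt_id x).const_sub ξ).add_const A)
    exact (((hu1.pow 2).const_mul (-B/D)).add (hu1.const_mul (F*v/D))).add_const _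
  have hdx : deriv (fun x' => Γ₀ x' y ξ η) x
      = c * (E * (-B/D * (2 * u ^ 1 * (-1)) + F*v/D * (-1))) := by
    have hfun : (fun x' => Γ₀ x' y ξ η)
        = fun x' => c * Real.exp (-B/D*(ξ-x'+A)^2 + F*v/D*(ξ-x'+A) + -(A/D)*v^2) :=
      funext fun x' => key x' y
    rw [hfun]
    exact ((hgx.exp).const_mul c).deriv
  -- y-derivative
  have hgy : HasDerivAt (fun y' : ℝ => -(A/D)*(η-y'-C)^2 + F*u/D*(η-y'-C) + -B/D*u^2)
      (-(A/D) * (2 * v ^ 1 * (-1)) + F*u/D * (-1)) y := by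
    have hv1 : HasDerivAt (fun y' : ℝ => η - y' - C) (-1) y := by
      simpa using (((hasDerivAt_id y).const_sub η).sub_const C)
    exact (((hv1.pow 2).const_mul (-(A/D))).add (hv1.const_mul (F*u/D))).add_const _
  have hdy : deriv (fun y' => Γ₀ x y' ξ η) y
      = c * (Real.exp (-(A/D)*v^2 + F*u/D*v + -B/D*u^2)
          * (-(A/D) * (2 * v ^ 1 * (-1)) + F*u/D * (-1))) := by
    have hfun : (fun y' => Γ₀ x y' ξ η)
        = fun y' => c * Real.exp (-(A/D)*(η-y'-C)^2 + F*u/D*(η-y'-C) + -B/D*u^2) := by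
      funext y'
      rw [key x y', hu_def]
      ring_nf
    rw [hfun]
    exact ((hgy.exp).const_mul c).deriv
  have hEy : Real.exp (-(A/D)*v^2 + F*u/D*v + -B/D*u^2) = E := by
    rw [hE]; ring_nf
  rw [hEy] at hdy
  have hΓxy : Γ₀ x y ξ η = c * E := key x y
  constructor
  · rw [hΓxy, hdx, hdy]
    have : x + (2*A) * (-B/D * (2 * u ^ 1 * (-1)) + F*v/D * (-1))
        + F * (-(A/D) * (2 * v ^ 1 * (-1)) + F*u/D * (-1)) - A = ξ := by
      have : ξ = x + u - A := by rw [hu_def]; ring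
      rw [this]
      field_simp
      ring
    linear_combination (c*E) * this
  · rw [hΓxy, hdx, hdy]
    have : y + F * (-B/D * (2 * u ^ 1 * (-1)) + F*v/D * (-1))
        + (2*B) * (-(A/D) * (2 * v ^ 1 * (-1)) + F*u/D * (-1)) + C = η := by
      have : η = y + v + C := by rw [hv_def]; ring
      rw [this]
      field_simp
      ring
    linear_combination (c*E) * this
end

section
/- Let τ > 0 and z, k ∈ ℝ, and define the Black-Scholes call price u^BS(σ) = e^z Φ(d₊(σ)) − e^k Φ(d₋(σ)) for σ > 0, where d±(σ) = (z − k ± σ²τ/2)/(σ√τ) and Φ is the standard normal CDF. Then u^BS(σ) tends to max(e^z − e^k, 0) as σ → 0 from the right. -/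
open Real Filter

lemma gauss_integrable :
    MeasureTheory.Integrable (fun t : ℝ => (2 * π) ^ (-(1 : ℝ) / 2) * Real.exp (-t ^ 2 / 2)) := by
  have h : (fun t : ℝ => (2 * π) ^ (-(1 : ℝ) / 2) * Real.exp (-t ^ 2 / 2))
      = fun t : ℝ => (2 * π) ^ (-(1 : ℝ) / 2) * Real.exp (-(1/2 : ℝ) * t ^ 2) := by
    funext t; ring_nf
  rw [h]
  exact (integrable_exp_neg_mul_sq (by norm_num)).const_mul _

lemma gauss_total :
    ∫ t : ℝ, (2 * π) ^ (-(1 : ℝ) / 2) * Real.exp (-t ^ 2 / 2) = 1 := by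
  rw [MeasureTheory.integral_const_mul]
  have h : ∫ t : ℝ, Real.exp (-t ^ 2 / 2) = Real.sqrt (2 * π) := by
    have := integral_gaussian (1/2 : ℝ)
    rw [show (π / (1/2 : ℝ)) = 2 * π by ring] at this
    rw [← this]
    congr 1; funext t; ring_nf
  rw [h, Real.sqrt_eq_rpow, ← Real.rpow_add (by positivity)]
  norm_num

lemma normCDF_tendsto_atTop : Tendsto normCDF atTop (nhds 1) := by
  have hc : MeasureTheory.AECover MeasureTheory.volume atTop (fun x : ℝ => Set.Iic x) :=
    MeasureTheory.aecover_Iic tendsto_id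
  have := hc.integral_tendsto_of_countably_generated gauss_integrable
  rwa [gauss_total] at this

lemma normCDF_add_Ioi (x : ℝ) :
    normCDF x + ∫ t in Set.Ioi x, (2 * π) ^ (-(1 : ℝ) / 2) * Real.exp (-t ^ 2 / 2) = 1 := by
  rw [normCDF, intervalIntegral.integral_Iic_add_Ioi gauss_integrable.integrableOn
    gauss_integrable.integrableOn, gauss_total]

lemma normCDF_tendsto_atBot : Tendsto normCDF atBot (nhds 0) := by
  have hc : MeasureTheory.AECover MeasureTheory.volume atBot (fun x : ℝ => Set.Ioi x) :=
    MeasureTheory.aecover_Ioi tendsto_id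
  have h := hc.integral_tendsto_of_countably_generated gauss_integrable
  rw [gauss_total] at h
  have : normCDF = fun x => 1 - ∫ t in Set.Ioi x, (2 * π) ^ (-(1 : ℝ) / 2) * Real.exp (-t ^ 2 / 2) := by
    funext x; have := normCDF_add_Ioi x; linarith
  rw [this]
  simpa using (tendsto_const_nhds (x := (1:ℝ))).sub h

lemma normCDF_zero : normCDF 0 = 1 / 2 := by
  have h := normCDF_add_Ioi 0
  have h2 : normCDF 0 = ∫ t in Set.Ioi (0:ℝ), (2 * π) ^ (-(1 : ℝ) / 2) * Real.exp (-t ^ 2 / 2) := by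
    rw [normCDF, show Set.Iic (0:ℝ) = Set.Iic (-(0:ℝ)) by norm_num, ← integral_comp_neg_Ioi]
    congr 1; funext t; ring_nf
  linarith [h, h2]

lemma normCDF_continuous : Continuous normCDF := by
  have hcont : Continuous fun t : ℝ => (2 * π) ^ (-(1 : ℝ) / 2) * Real.exp (-t ^ 2 / 2) := by
    fun_prop
  have h : normCDF = fun x => normCDF 0 + ∫ t in (0:ℝ)..x, (2 * π) ^ (-(1 : ℝ) / 2) * Real.exp (-t ^ 2 / 2) := by
    funext x
    rw [← intervalIntegral.integral_Iic_sub_Iic gauss_integrable.integrableOn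
      gauss_integrable.integrableOn]
    simp [normCDF]
  rw [h]
  exact continuous_const.add (intervalIntegral.continuous_primitive
    (fun a b => hcont.intervalIntegrable a b) 0)

theorem black_scholes_call_small_vol_limit
    (τ z k : ℝ) (hτ : 0 < τ) :
    Tendsto (fun σ => uBS τ z k σ) (nhdsWithin 0 (Set.Ioi 0))
      (nhds (max (Real.exp z - Real.exp k) 0)) := by
  have hs : 0 < Real.sqrt τ := Real.sqrt_pos.2 hτ
  have hev : (fun σ => uBS τ z k σ) =ᶠ[nhdsWithin (0:ℝ) (Set.Ioi 0)]
      (fun σ => Real.exp z * normCDF ((z - k) / (σ * Real.sqrt τ) + σ * Real.sqrt τ / 2)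
        - Real.exp k * normCDF ((z - k) / (σ * Real.sqrt τ) - σ * Real.sqrt τ / 2)) := by
    filter_upwards [self_mem_nhdsWithin] with σ hσ
    have hσ0 : (σ:ℝ) ≠ 0 := ne_of_gt hσ
    have hs0 : Real.sqrt τ ≠ 0 := ne_of_gt hs
    have key : σ ^ 2 * τ / 2 / (σ * Real.sqrt τ) = σ * Real.sqrt τ / 2 := by
      field_simp
      nlinarith [Real.mul_self_sqrt hτ.le]
    unfold uBS
    rw [show (z - k + σ ^ 2 * τ / 2) / (σ * Real.sqrt τ)
        = (z - k) / (σ * Real.sqrt τ) + σ * Real.sqrt τ / 2 from by rw [add_div, key],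
      show (z - k - σ ^ 2 * τ / 2) / (σ * Real.sqrt τ)
        = (z - k) / (σ * Real.sqrt τ) - σ * Real.sqrt τ / 2 from by rw [sub_div, key]]
  rw [tendsto_congr' hev]
  have hbase : Tendsto (fun σ : ℝ => σ * Real.sqrt τ) (nhdsWithin 0 (Set.Ioi 0))
      (nhdsWithin 0 (Set.Ioi 0)) := by
    rw [tendsto_nhdsWithin_iff]
    constructor
    · have : Tendsto (fun σ : ℝ => σ * Real.sqrt τ) (nhds 0) (nhds (0 * Real.sqrt τ)) :=
        (continuous_id.mul continuous_const).tendsto 0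
      simpa using this.mono_left nhdsWithin_le_nhds
    · filter_upwards [self_mem_nhdsWithin] with σ hσ
      exact mul_pos hσ hs
  have hhalf : Tendsto (fun σ : ℝ => σ * Real.sqrt τ / 2) (nhdsWithin (0:ℝ) (Set.Ioi 0))
      (nhds 0) := by
    have := (hbase.mono_right nhdsWithin_le_nhds).div_const 2
    simpa using this
  have hinv : Tendsto (fun σ : ℝ => (σ * Real.sqrt τ)⁻¹) (nhdsWithin (0:ℝ) (Set.Ioi 0)) atTop :=
    hbase.inv_tendsto_nhdsGT_zero
  rcases lt_trichotomy z k with h | h | h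
  · have hmax : max (Real.exp z - Real.exp k) 0 = 0 :=
      max_eq_right (by simp [Real.exp_le_exp, h.le])
    have hdiv : Tendsto (fun σ : ℝ => (z - k) / (σ * Real.sqrt τ))
        (nhdsWithin (0:ℝ) (Set.Ioi 0)) atBot := by
      have := Filter.Tendsto.neg_mul_atTop (C := z - k) (by linarith)
        tendsto_const_nhds hinv
      simpa [div_eq_mul_inv] using this
    have h1 := normCDF_tendsto_atBot.comp (hdiv.atBot_add hhalf)
    have h2 := normCDF_tendsto_atBot.comp (hdiv.atBot_add hhalf.neg)
    rw [hmax]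
    have := ((tendsto_const_nhds (x := Real.exp z)).mul h1).sub
      ((tendsto_const_nhds (x := Real.exp k)).mul h2)
    simpa [Function.comp_def, sub_eq_add_neg] using this
  · have hmax : max (Real.exp z - Real.exp k) 0 = 0 := by simp [h]
    rw [hmax, h]
    have harg : Tendsto (fun σ : ℝ => (z - k) / (σ * Real.sqrt τ))
        (nhdsWithin (0:ℝ) (Set.Ioi 0)) (nhds 0) := by
      simp [h]
    have h1 := (normCDF_continuous.tendsto 0).comp
      (by simpa using harg.add hhalf)
    have h2 := (normCDF_continuous.tendsto 0).comp
      (by simpa using harg.sub hhalf)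
    have := ((tendsto_const_nhds (x := Real.exp k)).mul h1).sub
      ((tendsto_const_nhds (x := Real.exp k)).mul h2)
    simp only [Function.comp_def, h] at *
    simpa [normCDF_zero] using this
  · have hmax : max (Real.exp z - Real.exp k) 0 = Real.exp z - Real.exp k :=
      max_eq_left (by simp [Real.exp_le_exp, h.le])
    have hdiv : Tendsto (fun σ : ℝ => (z - k) / (σ * Real.sqrt τ))
        (nhdsWithin (0:ℝ) (Set.Ioi 0)) atTop := by
      have := Filter.Tendsto.pos_mul_atTop (C := z - k) (by linarith)
        tendsto_const_nhds hinv
      simpa [div_eq_mul_inv] using this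
    have h1 := normCDF_tendsto_atTop.comp (hdiv.atTop_add hhalf)
    have h2 := normCDF_tendsto_atTop.comp (hdiv.atTop_add hhalf.neg)
    rw [hmax]
    have := ((tendsto_const_nhds (x := Real.exp z)).mul h1).sub
      ((tendsto_const_nhds (x := Real.exp k)).mul h2)
    simpa [Function.comp_def, sub_eq_add_neg] using this
end

section
/- Let β ≠ 0, and let κ, θ, δ > 0, ρ ∈ [−1, 1], y ∈ ℝ be Heston parameters. Define the transformed parameters κ_Z = κ, θ_Z = β²θ, δ_Z = |β|δ, ρ_Z = sign(β)·ρ, and y_Z = y + log(β²). Then the following identities hold for every y ∈ ℝ: (i) (1/2)e^{y + log β²} = β²·(1/2)e^{y}; (ii) sign(β)·e^{(y + log β²)/2} = β·e^{y/2}; (iii) (κ_Z θ_Z − δ_Z²/2)·e^{−(y + log β²)} − κ_Z = (κθ − δ²/2)·e^{−y} − κ; (iv) δ_Z·e^{−(y + log β²)/2} = δ·e^{−y/2}; and (v) ρ_Z · δ_Z = β·ρ·δ. -/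
open Real

theorem heston_letf_parameter_transformation
    (β κ θ δ ρ : ℝ) (hβ : β ≠ 0) (hκ : 0 < κ) (hθ : 0 < θ) (hδ : 0 < δ)
    (hρ : ρ ∈ Set.Icc (-1 : ℝ) 1)
    (κZ θZ δZ ρZ : ℝ)
    (hκZ : κZ = κ) (hθZ : θZ = β ^ 2 * θ) (hδZ : δZ = |β| * δ)
    (hρZ : ρZ = Real.sign β * ρ) :
    ∀ y : ℝ,
      ((1 / 2) * Real.exp (y + Real.log (β ^ 2)) = β ^ 2 * ((1 / 2) * Real.exp y))
      ∧ (Real.sign β * Real.exp ((y + Real.log (β ^ 2)) / 2) = β * Real.exp (y / 2))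
      ∧ ((κZ * θZ - δZ ^ 2 / 2) * Real.exp (-(y + Real.log (β ^ 2))) - κZ
          = (κ * θ - δ ^ 2 / 2) * Real.exp (-y) - κ)
      ∧ (δZ * Real.exp (-(y + Real.log (β ^ 2)) / 2) = δ * Real.exp (-y / 2))
      ∧ (ρZ * δZ = β * ρ * δ) := by
  intro y
  have hβ2 : (0 : ℝ) < β ^ 2 := by positivity
  have h1 : Real.exp (Real.log (β ^ 2)) = β ^ 2 := Real.exp_log hβ2
  have hsq : |β| ^ 2 = β ^ 2 := sq_abs β
  have h2 : Real.exp (Real.log (β ^ 2) / 2) = |β| := by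
    rw [show Real.log (β ^ 2) = 2 * Real.log |β| by
      rw [← hsq, Real.log_pow]; push_cast; ring]
    rw [show 2 * Real.log |β| / 2 = Real.log |β| by ring]
    exact Real.exp_log (abs_pos.mpr hβ)
  have hsign : Real.sign β * |β| = β := by
    rcases hβ.lt_or_gt with h | h
    · rw [Real.sign_of_neg h, abs_of_neg h]; ring
    · rw [Real.sign_of_pos h, abs_of_pos h]; ring
  refine ⟨?_, ?_, ?_, ?_, ?_⟩
  · rw [Real.exp_add, h1]; ring
  · rw [show (y + Real.log (β ^ 2)) / 2 = y / 2 + Real.log (β ^ 2) / 2 by ring,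
      Real.exp_add, h2]
    rw [show Real.sign β * (Real.exp (y / 2) * |β|) = Real.sign β * |β| * Real.exp (y / 2) by ring, hsign]
  · have hinv : Real.exp (-(y + Real.log (β ^ 2))) = Real.exp (-y) / β ^ 2 := by
      rw [neg_add, Real.exp_add, Real.exp_neg (Real.log (β ^ 2)), h1]; ring
    rw [hinv, hκZ, hθZ, hδZ, mul_pow, sq_abs]
    field_simp
  · rw [show -(y + Real.log (β ^ 2)) / 2 = -y / 2 + -(Real.log (β ^ 2) / 2) by ring,
      Real.exp_add, Real.exp_neg, h2, hδZ]
    field_simp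
  · rw [hρZ, hδZ]
    calc Real.sign β * ρ * (|β| * δ) = (Real.sign β * |β|) * ρ * δ := by ring
      _ = β * ρ * δ := by rw [hsign]
end

section
/- Let β ≠ 0, a₀₀ > 0, and a₁₀, a₀₁, f₀₀ ∈ ℝ. Set σ₀ = |β|√(2a₀₀). Define the first-order (τ-independent) ETF implied volatility approximation σ̂_X(λ) = √(2a₀₀) + ( a₁₀/(2√(2a₀₀)) + a₀₁ f₀₀/(2(2a₀₀)^{3/2}) )·λ and the first-order (τ-independent) LETF implied volatility approximation σ̂_Z(λ) = σ₀ + ( β a₁₀/(2σ₀) + β³ a₀₁ f₀₀/(2σ₀³) )·λ. Then for every λ ∈ ℝ, σ̂_Z(λ) = |β| · σ̂_X(λ/β). -/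
open Real

theorem first_order_implied_vol_scaling
    (β a₀₀ a₁₀ a₀₁ f₀₀ : ℝ) (hβ : β ≠ 0) (ha : 0 < a₀₀)
    (σ₀ : ℝ) (hσ₀ : σ₀ = |β| * Real.sqrt (2 * a₀₀))
    (σX σZ : ℝ → ℝ)
    (hσX : ∀ lam : ℝ, σX lam = Real.sqrt (2 * a₀₀)
      + (a₁₀ / (2 * Real.sqrt (2 * a₀₀))
          + a₀₁ * f₀₀ / (2 * (2 * a₀₀) ^ ((3 : ℝ) / 2))) * lam)
    (hσZ : ∀ lam : ℝ, σZ lam = σ₀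
      + (β * a₁₀ / (2 * σ₀) + β ^ 3 * a₀₁ * f₀₀ / (2 * σ₀ ^ 3)) * lam) :
    ∀ lam : ℝ, σZ lam = |β| * σX (lam / β) := by
  intro lam
  have h2a : (0:ℝ) < 2 * a₀₀ := by linarith
  set s := Real.sqrt (2 * a₀₀) with hs
  have hspos : 0 < s := Real.sqrt_pos.mpr h2a
  have hrpow : (2 * a₀₀) ^ ((3 : ℝ) / 2) = s ^ 3 := by
    rw [hs, Real.sqrt_eq_rpow, ← Real.rpow_natCast ((2*a₀₀) ^ ((1:ℝ)/2)) 3,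
      ← Real.rpow_mul h2a.le]
    norm_num
  set b := |β| with hb
  have hbpos : 0 < b := abs_pos.mpr hβ
  have hb2 : b ^ 2 = β ^ 2 := sq_abs β
  rw [hσZ, hσX, hσ₀, hrpow]
  rcases abs_choice β with h | h
  · rw [hb, h]; field_simp
  · rw [hb, h]; field_simp; ring
end
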